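/- arXiv:1908.09264 — 2 statements merged into one kernel-verified Lean document; each statement's English description precedes it below -/
import Mathlib

section
/- Let (Ω, 𝓕, P) be a probability space, H ∈ (0,1), σ > 0, and let B : ℝ × Ω → ℝ be jointly measurable with E[B(t,·)B(s,·)] = (σ²/2)(|t|^{2H} + |s|^{2H} − |t−s|^{2H}) for all t, s ∈ ℝ. Let ψ : ℝ → ℝ be continuous with compact support, fix j, k ∈ ℝ, and define c_j(ω) = 2^{j} ∫ B(t,ω) ψ(2^{j}t − k) dt and c_{j−1}(ω) = 2^{j−1} ∫ B(t,ω) ψ(2^{j−1}t − k) dt. Assume the functions (t,s,ω) ↦ B(t,ω)B(s,ω)ψ(2^{j}t−k)ψ(2^{j}s−k) and (t,s,ω) ↦ B(t,ω)B(s,ω)ψ(2^{j−1}t−k)ψ(2^{j−1}s−k) are integrable on ℝ × ℝ × Ω. Then E[c_{j−1}²] = 2^{2H} E[c_j²]. -/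
open Real MeasureTheory

lemma fbmAux_hcs_affine {ψ : ℝ → ℝ} (hψs : HasCompactSupport ψ) {a : ℝ} (ha : a ≠ 0) (k : ℝ) :
    HasCompactSupport (fun t : ℝ => ψ (a * t - k)) := by
  apply HasCompactSupport.intro (K := (fun u : ℝ => (u + k) / a) '' tsupport ψ)
    (hψs.image (by continuity))
  intro t ht
  by_contra h
  apply ht
  refine ⟨a * t - k, subset_tsupport ψ h, ?_⟩
  field_simp
  ring

/-- Scaling of the covariance-wavelet double integral under doubling. -/
lemma fbmAux_scaling (H σ : ℝ) (hH : 0 < H) {ψ : ℝ → ℝ}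
    (hψc : Continuous ψ) (hψs : HasCompactSupport ψ) {b : ℝ} (hb : b ≠ 0) (k : ℝ) :
    ∫ q : ℝ × ℝ, (σ ^ 2 / 2) * (|q.1| ^ (2 * H) + |q.2| ^ (2 * H) - |q.1 - q.2| ^ (2 * H)) *
        ψ (b * q.1 - k) * ψ (b * q.2 - k)
      = 4 * (2 : ℝ) ^ (2 * H) *
        ∫ q : ℝ × ℝ, (σ ^ 2 / 2) * (|q.1| ^ (2 * H) + |q.2| ^ (2 * H) - |q.1 - q.2| ^ (2 * H)) *
          ψ (2 * b * q.1 - k) * ψ (2 * b * q.2 - k) := by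
  have h2H : (0 : ℝ) ≤ 2 * H := by positivity
  set K : ℝ × ℝ → ℝ :=
    fun q => (σ ^ 2 / 2) * (|q.1| ^ (2 * H) + |q.2| ^ (2 * H) - |q.1 - q.2| ^ (2 * H)) with hK
  have hKc : Continuous K := by
    apply continuous_const.mul
    exact ((((continuous_fst.abs).rpow_const fun _ => Or.inr h2H).add
      ((continuous_snd.abs).rpow_const fun _ => Or.inr h2H)).sub
      (((continuous_fst.sub continuous_snd).abs).rpow_const fun _ => Or.inr h2H))
  -- integrability at a generic nonzero scale
  have hint : ∀ a : ℝ, a ≠ 0 →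
      Integrable (fun q : ℝ × ℝ => K q * ψ (a * q.1 - k) * ψ (a * q.2 - k)) volume := by
    intro a ha
    have hψa := fbmAux_hcs_affine hψs ha k
    have hψac : Continuous fun t : ℝ => ψ (a * t - k) := hψc.comp (by continuity)
    have hprod : HasCompactSupport
        (fun q : ℝ × ℝ => ψ (a * q.1 - k) * ψ (a * q.2 - k)) := by
      apply HasCompactSupport.intro
        (K := tsupport (fun t : ℝ => ψ (a * t - k)) ×ˢ tsupport (fun t : ℝ => ψ (a * t - k)))
        (hψa.prod hψa)
      intro q hq
      rw [Set.mem_prod, not_and_or] at hq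
      rcases hq with h | h
      · rw [image_eq_zero_of_notMem_tsupport h, zero_mul]
      · rw [image_eq_zero_of_notMem_tsupport h, mul_zero]
    have hcs : HasCompactSupport
        (fun q : ℝ × ℝ => K q * ψ (a * q.1 - k) * ψ (a * q.2 - k)) := by
      simp_rw [mul_assoc]
      exact hprod.mul_left
    exact (((hKc.mul (hψac.comp continuous_fst)).mul
      (hψac.comp continuous_snd)).integrable_of_hasCompactSupport hcs)
  have hhalf : ∀ Φ : ℝ → ℝ, ∫ x, Φ x = 2 * ∫ x, Φ (2 * x) := by
    intro Φ
    rw [Measure.integral_comp_mul_left Φ 2, smul_eq_mul, abs_of_pos (by norm_num : (0:ℝ) < 2⁻¹)]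
    ring
  have h2b : (2 : ℝ) * b ≠ 0 := by simp [hb]
  rw [Measure.volume_eq_prod, integral_prod _ (Measure.volume_eq_prod ℝ ℝ ▸ hint b hb),
    integral_prod _ (Measure.volume_eq_prod ℝ ℝ ▸ hint (2 * b) h2b)]
  rw [hhalf (fun t => ∫ s, K (t, s) * ψ (b * t - k) * ψ (b * s - k))]
  have h3 : ∀ t : ℝ, (∫ s, K (2 * t, s) * ψ (b * (2 * t) - k) * ψ (b * s - k))
      = 2 * ∫ s, K (2 * t, 2 * s) * ψ (b * (2 * t) - k) * ψ (b * (2 * s) - k) :=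
    fun t => hhalf _
  simp only [h3]
  have habs : ∀ x : ℝ, |2 * x| ^ (2 * H) = 2 ^ (2 * H) * |x| ^ (2 * H) := by
    intro x
    rw [abs_mul, abs_two, Real.mul_rpow (by norm_num) (abs_nonneg x)]
  have h4 : ∀ t s : ℝ, K (2 * t, 2 * s) * ψ (b * (2 * t) - k) * ψ (b * (2 * s) - k)
      = 2 ^ (2 * H) * (K (t, s) * ψ (2 * b * t - k) * ψ (2 * b * s - k)) := by
    intro t s
    have e1 : b * (2 * t) = 2 * b * t := by ring
    have e2 : b * (2 * s) = 2 * b * s := by ring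
    rw [e1, e2, hK]
    simp only
    rw [show (2 * t - 2 * s) = 2 * (t - s) by ring, habs, habs, habs]
    ring
  simp only [h4]
  simp only [integral_const_mul]
  ring

/-- Per-level reduction: the second moment of the wavelet coefficient equals the
double integral of the covariance against the wavelet. -/
lemma fbmAux_level {Ω : Type*} [MeasureSpace Ω] (P : Measure Ω) [IsProbabilityMeasure P]
    (B : ℝ × Ω → ℝ) (ψ : ℝ → ℝ) (a k : ℝ)
    (hint : Integrable
      (fun q : (ℝ × ℝ) × Ω =>
        B (q.1.1, q.2) * B (q.1.2, q.2) * ψ (a * q.1.1 - k) * ψ (a * q.1.2 - k))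
      ((volume : Measure (ℝ × ℝ)).prod P)) :
    ∫ ω, (a * ∫ t : ℝ, B (t, ω) * ψ (a * t - k)) ^ 2 ∂P
      = a ^ 2 * ∫ q : ℝ × ℝ,
          (∫ ω, B (q.1, ω) * B (q.2, ω) ∂P) * ψ (a * q.1 - k) * ψ (a * q.2 - k) := by
  simp_rw [mul_pow]
  rw [integral_const_mul]
  congr 1
  have h1 : ∀ᵐ ω ∂P, Integrable
      (fun q : ℝ × ℝ => B (q.1, ω) * B (q.2, ω) * ψ (a * q.1 - k) * ψ (a * q.2 - k)) volume :=
    hint.swap.prod_right_ae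
  have h2 : ∀ᵐ ω ∂P, (∫ t : ℝ, B (t, ω) * ψ (a * t - k)) ^ 2
      = ∫ q : ℝ × ℝ, B (q.1, ω) * B (q.2, ω) * ψ (a * q.1 - k) * ψ (a * q.2 - k) := by
    filter_upwards [h1] with ω hω
    rw [Measure.volume_eq_prod] at hω ⊢
    rw [integral_prod _ hω]
    calc (∫ t : ℝ, B (t, ω) * ψ (a * t - k)) ^ 2
        = ∫ t : ℝ, (B (t, ω) * ψ (a * t - k)) * (∫ s : ℝ, B (s, ω) * ψ (a * s - k)) := by
          rw [integral_mul_const, sq]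
      _ = ∫ t : ℝ, ∫ s : ℝ, (B (t, ω) * ψ (a * t - k)) * (B (s, ω) * ψ (a * s - k)) := by
          congr 1 with t
          rw [integral_const_mul]
      _ = ∫ t : ℝ, ∫ s : ℝ, B (t, ω) * B (s, ω) * ψ (a * t - k) * ψ (a * s - k) := by
          congr 1 with t
          congr 1 with s
          ring
  rw [integral_congr_ae h2]
  have hswap : Integrable (Function.uncurry fun (ω : Ω) (q : ℝ × ℝ) =>
      B (q.1, ω) * B (q.2, ω) * ψ (a * q.1 - k) * ψ (a * q.2 - k))
      (P.prod (volume : Measure (ℝ × ℝ))) := hint.swap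
  rw [integral_integral_swap hswap]
  congr 1 with q
  rw [integral_mul_const, integral_mul_const]

/-- Variance scaling of fBm wavelet coefficients (Proposition 1, variance form):
if `B` has the fBm covariance `E[B(t)B(s)] = (σ²/2)(|t|^{2H}+|s|^{2H}−|t−s|^{2H})`, then the
wavelet coefficients `c_j = 2^j ∫ B(t,·) ψ(2^j t − k) dt` satisfy
`E[c_{j−1}²] = 2^{2H} E[c_j²]`. -/
theorem fbm_wavelet_coeff_variance_scaling
    {Ω : Type*} [MeasureSpace Ω] (P : Measure Ω) [IsProbabilityMeasure P]
    (H σ : ℝ) (hH : H ∈ Set.Ioo (0 : ℝ) 1) (hσ : 0 < σ)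
    (B : ℝ × Ω → ℝ) (hB : Measurable B)
    (hcov : ∀ t s : ℝ, ∫ ω, B (t, ω) * B (s, ω) ∂P =
      (σ ^ 2 / 2) * (|t| ^ (2 * H) + |s| ^ (2 * H) - |t - s| ^ (2 * H)))
    (ψ : ℝ → ℝ) (hψc : Continuous ψ) (hψs : HasCompactSupport ψ) (j k : ℝ)
    (hint_j : Integrable
      (fun q : (ℝ × ℝ) × Ω =>
        B (q.1.1, q.2) * B (q.1.2, q.2) *
          ψ ((2 : ℝ) ^ j * q.1.1 - k) * ψ ((2 : ℝ) ^ j * q.1.2 - k))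
      ((volume : Measure (ℝ × ℝ)).prod P))
    (hint_jm1 : Integrable
      (fun q : (ℝ × ℝ) × Ω =>
        B (q.1.1, q.2) * B (q.1.2, q.2) *
          ψ ((2 : ℝ) ^ (j - 1) * q.1.1 - k) * ψ ((2 : ℝ) ^ (j - 1) * q.1.2 - k))
      ((volume : Measure (ℝ × ℝ)).prod P)) :
    ∫ ω, ((2 : ℝ) ^ (j - 1) * ∫ t : ℝ, B (t, ω) * ψ ((2 : ℝ) ^ (j - 1) * t - k)) ^ 2 ∂P =
      (2 : ℝ) ^ (2 * H) *
        ∫ ω, ((2 : ℝ) ^ j * ∫ t : ℝ, B (t, ω) * ψ ((2 : ℝ) ^ j * t - k)) ^ 2 ∂P := by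
  have hb : ((2:ℝ) ^ (j - 1)) ≠ 0 := (Real.rpow_pos_of_pos two_pos _).ne'
  have hab : (2:ℝ) ^ j = 2 * (2:ℝ) ^ (j - 1) := by
    have h := Real.rpow_add two_pos 1 (j - 1)
    rw [show (1:ℝ) + (j - 1) = j by ring, Real.rpow_one] at h
    exact h
  rw [fbmAux_level P B ψ _ k hint_jm1, fbmAux_level P B ψ _ k hint_j]
  simp_rw [hcov]
  rw [hab, fbmAux_scaling H σ hH.1 hψc hψs hb k]
  ring
end

section
/- Let σ₂ > 0 and 0 ≤ ε ≤ σ₂/2, and let σ₁ satisfy σ₂ − ε ≤ σ₁ ≤ σ₂ + ε. Then the Kullback–Leibler divergence between the centered Gaussian measures N(0, σ₁²) and N(0, σ₂²) on ℝ satisfies D_KL(N(0,σ₁²) ‖ N(0,σ₂²)) ≤ 3ε/σ₂. -/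
open MeasureTheory ProbabilityTheory Real Set
open scoped NNReal ENNReal

lemma aux_integral_sq_mul_exp {b : ℝ} (hb : 0 < b) :
    ∫ x : ℝ, x ^ 2 * rexp (-b * x ^ 2) = b ^ (-(3:ℝ)/2) * (√π / 2) := by
  have key : ∫ x in Ioi (0:ℝ), x ^ ((2:ℝ)) * rexp (-b * x ^ (2:ℝ))
      = b ^ (-((2:ℝ) + 1) / 2) * (1 / 2) * Real.Gamma (((2:ℝ) + 1) / 2) :=
    integral_rpow_mul_exp_neg_mul_rpow (by norm_num) (by norm_num) hb
  have hG : Real.Gamma ((3:ℝ)/2) = √π / 2 := by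
    have h12 : ((3:ℝ)/2) = 1/2 + 1 := by norm_num
    rw [h12, Real.Gamma_add_one (by norm_num), Real.Gamma_one_half_eq]
    ring
  have habs : ∫ x : ℝ, x ^ 2 * rexp (-b * x ^ 2)
      = ∫ x : ℝ, |x| ^ (2:ℝ) * rexp (-b * |x| ^ (2:ℝ)) := by
    have e : ∀ y : ℝ, y ^ (2:ℝ) = y ^ 2 := fun y => by
      rw [show (2:ℝ) = ((2:ℕ):ℝ) by norm_num, rpow_natCast]
    congr 1; ext x
    rw [e, sq_abs]
  rw [habs, integral_comp_abs (f := fun x => x ^ (2:ℝ) * rexp (-b * x ^ (2:ℝ))), key]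
  rw [show (-((2:ℝ) + 1) / 2) = -(3:ℝ)/2 by norm_num, show (((2:ℝ) + 1) / 2) = (3:ℝ)/2 by norm_num,
    hG]
  ring

lemma aux_integrable_sq_mul_exp {b : ℝ} (hb : 0 < b) :
    Integrable (fun x : ℝ => x ^ 2 * rexp (-b * x ^ 2)) := by
  have := integrable_rpow_mul_exp_neg_mul_sq hb (s := 2) (by norm_num)
  have e : ∀ y : ℝ, y ^ (2:ℝ) = y ^ 2 := fun y => by
    rw [show (2:ℝ) = ((2:ℕ):ℝ) by norm_num, rpow_natCast]
  simpa [e] using this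

lemma aux_pdf_smul (v : ℝ≥0) (hv : v ≠ 0) (g : ℝ → ℝ) :
    ∫ x, g x ∂(gaussianReal 0 v)
      = ∫ x, gaussianPDFReal 0 v x * g x := by
  rw [gaussianReal_of_var_ne_zero 0 hv]
  have hmeas : Measurable fun x => (gaussianPDFReal 0 v x).toNNReal :=
    (measurable_gaussianPDFReal 0 v).real_toNNReal
  have : volume.withDensity (gaussianPDF 0 v)
      = volume.withDensity (fun x => ((gaussianPDFReal 0 v x).toNNReal : ℝ≥0∞)) := rfl
  rw [this, integral_withDensity_eq_integral_smul hmeas]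
  congr 1; ext x
  simp only [NNReal.smul_def, smul_eq_mul, Real.coe_toNNReal _ (gaussianPDFReal_nonneg 0 v x)]

lemma aux_pdf_expand (v : ℝ≥0) (hv : v ≠ 0) (x : ℝ) :
    gaussianPDFReal 0 v x = (√(2 * π) * √(v:ℝ))⁻¹ * rexp (-(((2:ℝ)*v)⁻¹) * x ^ 2) := by
  rw [gaussianPDFReal]
  have h1 : √(2 * π * (v:ℝ)) = √(2*π) * √(v:ℝ) := Real.sqrt_mul (by positivity) _
  rw [h1]
  congr 1
  rw [sub_zero]
  ring

lemma aux_integrable_sq_gaussian (v : ℝ≥0) (hv : v ≠ 0) :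
    Integrable (fun x : ℝ => x ^ 2) (gaussianReal 0 v) := by
  rw [gaussianReal_of_var_ne_zero 0 hv]
  have hmeas : Measurable fun x => (gaussianPDFReal 0 v x).toNNReal :=
    (measurable_gaussianPDFReal 0 v).real_toNNReal
  have hv' : (0:ℝ) < (v:ℝ) := by positivity
  have : volume.withDensity (gaussianPDF 0 v)
      = volume.withDensity (fun x => ((gaussianPDFReal 0 v x).toNNReal : ℝ≥0∞)) := rfl
  rw [this, integrable_withDensity_iff_integrable_smul hmeas]
  have hb : (0:ℝ) < ((2:ℝ)*v)⁻¹ := by positivity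
  have := (aux_integrable_sq_mul_exp hb).const_mul ((√(2 * π) * √(v:ℝ))⁻¹)
  refine this.congr (ae_of_all _ fun x => ?_)
  dsimp only
  simp only [NNReal.smul_def, smul_eq_mul, Real.coe_toNNReal _ (gaussianPDFReal_nonneg 0 v x)]
  rw [aux_pdf_expand v hv]
  ring

lemma aux_integral_sq_gaussian (v : ℝ≥0) (hv : v ≠ 0) :
    ∫ x, x ^ 2 ∂(gaussianReal 0 v) = (v:ℝ) := by
  have hv' : (0:ℝ) < (v:ℝ) := by positivity
  have hb : (0:ℝ) < ((2:ℝ)*v)⁻¹ := by positivity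
  rw [aux_pdf_smul v hv]
  have : ∫ x, gaussianPDFReal 0 v x * x ^ 2
      = (√(2 * π) * √(v:ℝ))⁻¹ * ∫ x, x ^ 2 * rexp (-(((2:ℝ)*v)⁻¹) * x ^ 2) := by
    rw [← integral_const_mul]
    congr 1; ext x
    rw [aux_pdf_expand v hv]; ring
  rw [this, aux_integral_sq_mul_exp hb]
  have h2v : (0:ℝ) < 2*(v:ℝ) := by positivity
  have hrw : (((2:ℝ)*v)⁻¹) ^ (-(3:ℝ)/2) = (2*(v:ℝ)) * (√2 * √(v:ℝ)) := by
    rw [Real.inv_rpow h2v.le, ← Real.rpow_neg h2v.le,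
      show (-(-(3:ℝ)/2)) = 1 + 1/2 by norm_num, Real.rpow_add h2v, Real.rpow_one,
      ← Real.sqrt_eq_rpow, Real.sqrt_mul (by norm_num : (0:ℝ) ≤ 2)]
  rw [hrw, Real.sqrt_mul (by norm_num : (0:ℝ) ≤ 2)]
  have s2 : (0:ℝ) < √2 := by positivity
  have sp : (0:ℝ) < √π := Real.sqrt_pos.mpr Real.pi_pos
  have sv : (0:ℝ) < √(v:ℝ) := Real.sqrt_pos.mpr hv'
  have hvv : √(v:ℝ) * √(v:ℝ) = (v:ℝ) := Real.mul_self_sqrt hv'.le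
  field_simp

lemma aux_log_pdf (v : ℝ≥0) (hv : 0 < (v:ℝ)) (x : ℝ) :
    Real.log (gaussianPDFReal 0 v x) = -(Real.log (2*π*(v:ℝ)))/2 - x^2/(2*(v:ℝ)) := by
  rw [gaussianPDFReal, Real.log_mul (by positivity) (Real.exp_ne_zero _), Real.log_inv,
    Real.log_sqrt (by positivity), Real.log_exp, sub_zero]
  ring

/-- Quantitative form of Proposition 2: if `σ₂ − ε ≤ σ₁ ≤ σ₂ + ε` with `0 ≤ ε ≤ σ₂/2`, then the
Kullback–Leibler divergence `∫ log(dp₁/dp₂) dp₁` between `p₁ = N(0,σ₁²)` and `p₂ = N(0,σ₂²)`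
is at most `3ε/σ₂`. -/
theorem klDiv_centered_gaussians_le (σ₁ σ₂ ε : ℝ) (h₂ : 0 < σ₂)
    (hε0 : 0 ≤ ε) (hε : ε ≤ σ₂ / 2) (hlo : σ₂ - ε ≤ σ₁) (hhi : σ₁ ≤ σ₂ + ε) :
    ∫ x, llr (gaussianReal 0 (Real.toNNReal (σ₁ ^ 2)))
          (gaussianReal 0 (Real.toNNReal (σ₂ ^ 2))) x
        ∂(gaussianReal 0 (Real.toNNReal (σ₁ ^ 2))) ≤ 3 * ε / σ₂ := by
  have h₁ : 0 < σ₁ := by linarith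
  set v₁ := Real.toNNReal (σ₁ ^ 2) with hv₁def
  set v₂ := Real.toNNReal (σ₂ ^ 2) with hv₂def
  have hc₁ : ((v₁:ℝ)) = σ₁^2 := Real.coe_toNNReal _ (sq_nonneg _)
  have hc₂ : ((v₂:ℝ)) = σ₂^2 := Real.coe_toNNReal _ (sq_nonneg _)
  have hv₁ : v₁ ≠ 0 := by
    rw [hv₁def, ne_eq, Real.toNNReal_eq_zero, not_le]
    positivity
  have hv₂ : v₂ ≠ 0 := by
    rw [hv₂def, ne_eq, Real.toNNReal_eq_zero, not_le]
    positivity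
  have hv₁' : (0:ℝ) < (v₁:ℝ) := by rw [hc₁]; positivity
  have hv₂' : (0:ℝ) < (v₂:ℝ) := by rw [hc₂]; positivity
  set p₁ := gaussianReal 0 v₁ with hp₁
  set p₂ := gaussianReal 0 v₂ with hp₂
  have hrn : p₁.rnDeriv p₂ =ᵐ[volume]
      fun x => (gaussianPDF 0 v₂ x)⁻¹ * gaussianPDF 0 v₁ x := by
    have h1 := Measure.rnDeriv_withDensity_right p₁ volume
      (measurable_gaussianPDF 0 v₂).aemeasurable
      (ae_of_all _ fun x => (gaussianPDF_pos 0 hv₂ x).ne')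
      (ae_of_all _ fun x => ENNReal.ofReal_ne_top)
    rw [← gaussianReal_of_var_ne_zero 0 hv₂, ← hp₂] at h1
    filter_upwards [h1, rnDeriv_gaussianReal 0 v₁] with x hx h1x
    rw [hx]
    rw [← hp₁] at h1x
    rw [h1x]
  have hac : p₁ ≪ volume := gaussianReal_absolutelyContinuous 0 hv₁
  have hllr : llr p₁ p₂ =ᵐ[p₁] fun x =>
      (Real.log (σ₂^2) - Real.log (σ₁^2))/2 + (1/(2*σ₂^2) - 1/(2*σ₁^2)) * x^2 := by
    filter_upwards [hac.ae_le hrn] with x hx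
    show Real.log (p₁.rnDeriv p₂ x).toReal = _
    rw [hx]
    rw [gaussianPDF, gaussianPDF, ENNReal.toReal_mul, ENNReal.toReal_inv,
      ENNReal.toReal_ofReal (gaussianPDFReal_nonneg _ _ _),
      ENNReal.toReal_ofReal (gaussianPDFReal_nonneg _ _ _),
      Real.log_mul (inv_ne_zero (gaussianPDFReal_pos 0 v₂ x hv₂).ne') (gaussianPDFReal_pos 0 v₁ x hv₁).ne',
      Real.log_inv, aux_log_pdf v₁ hv₁' x, aux_log_pdf v₂ hv₂' x, hc₁, hc₂,
      Real.log_mul (by positivity) (by positivity : (σ₁:ℝ)^2 ≠ 0),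
      Real.log_mul (by positivity) (by positivity : (σ₂:ℝ)^2 ≠ 0)]
    field_simp
    ring
  rw [integral_congr_ae hllr]
  have hint : Integrable (fun x : ℝ => x^2) p₁ := aux_integrable_sq_gaussian v₁ hv₁
  have hval : ∫ x, x^2 ∂p₁ = σ₁^2 := by
    rw [hp₁, aux_integral_sq_gaussian v₁ hv₁, hc₁]
  rw [integral_add (integrable_const _) (hint.const_mul _), integral_const,
    integral_const_mul, hval]
  have hmeas1 : p₁.real Set.univ = 1 := by
    simp
  rw [hmeas1, smul_eq_mul, one_mul]
  -- now pure real inequality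
  have hlogsq₁ : Real.log (σ₁^2) = 2 * Real.log σ₁ := by
    rw [Real.log_pow]; norm_num
  have hlogsq₂ : Real.log (σ₂^2) = 2 * Real.log σ₂ := by
    rw [Real.log_pow]; norm_num
  rw [hlogsq₁, hlogsq₂]
  have e2 : (1/(2*σ₂^2) - 1/(2*σ₁^2)) * σ₁^2 = σ₁^2/(2*σ₂^2) - 1/2 := by
    field_simp
  rw [e2]
  have hμ : 0 ≤ ε/σ₂ := by positivity
  have h3 : 3 * ε / σ₂ = 3 * (ε/σ₂) := by ring
  rw [h3]
  rcases le_total σ₁ σ₂ with hcase | hcase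
  · have hL : Real.log σ₂ - Real.log σ₁ ≤ 2*(ε/σ₂) := by
      have h0 : (0:ℝ) < σ₂/σ₁ := by positivity
      have hlog := Real.log_le_sub_one_of_pos h0
      rw [Real.log_div h₂.ne' h₁.ne'] at hlog
      have hfrac : σ₂/σ₁ - 1 ≤ 2*(ε/σ₂) := by
        rw [show 2*(ε/σ₂) = 2*ε/σ₂ by ring]
        rw [div_sub_one h₁.ne', div_le_div_iff₀ h₁ h₂]
        nlinarith
      linarith
    have hQ : σ₁^2/(2*σ₂^2) - 1/2 ≤ 0 := by
      rw [sub_nonpos, div_le_iff₀ (by positivity : (0:ℝ) < 2*σ₂^2)]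
      nlinarith
    linarith [hL, hQ, hμ]
  · have hL : Real.log σ₂ - Real.log σ₁ ≤ 0 := by
      have := Real.log_le_log h₂ hcase
      linarith
    have hQ : σ₁^2/(2*σ₂^2) - 1/2 ≤ 3*(ε/σ₂) := by
      rw [show 3*(ε/σ₂) = 3*ε/σ₂ by ring, sub_le_iff_le_add, div_le_iff₀ (by positivity : (0:ℝ) < 2*σ₂^2)]
      have hfs : (3*ε/σ₂ + 1/2) * (2*σ₂^2) = 6*ε*σ₂ + σ₂^2 := by
        field_simp
        ring
      rw [hfs]
      nlinarith
    linarith [hL, hQ, hμ]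
end
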